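/- arXiv:math/9912237 — 4 statements merged into one kernel-verified Lean document; each statement's English description precedes it below -/
import Mathlib

section
/- Suppose x : [0, t*] → ℝⁿ is a solution of the system such that x(t) ∈ [0,∞)ⁿ for all t ∈ [0, t*]. Then for each coordinate k ∈ {1,…,n}, if x_k(0) > 0 then x_k(t*) > 0. -/
private lemma coord_abs_le_norm {n : ℕ} (x : EuclideanSpace ℝ (Fin n)) (l : Fin n) :
    |x l| ≤ ‖x‖ := by
  have h : ‖x l‖ ^ 2 ≤ ∑ i, ‖x i‖ ^ 2 :=
    Finset.single_le_sum (f := fun i => ‖x i‖ ^ 2) (fun i _ => sq_nonneg _) (Finset.mem_univ l)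
  rw [EuclideanSpace.norm_eq]
  calc |x l| = Real.sqrt (‖x l‖ ^ 2) := by
        rw [Real.sqrt_sq_eq_abs, Real.norm_eq_abs, abs_abs]
  _ ≤ _ := Real.sqrt_le_sqrt h

set_option maxHeartbeats 1000000 in
theorem stmt_13
    (n m : ℕ) (hm : 0 < m) (hmn : m ≤ n)
    (θ : ℝ → ℝ)
    (hθlip : LocallyLipschitz θ)
    (hθ0 : θ 0 = 0)
    (hθnn : ∀ y : ℝ, 0 ≤ θ y)
    (hθmono : StrictMonoOn θ (Set.Ici (0:ℝ)))
    (hθonto : ∀ r : ℝ, 0 ≤ r → ∃ y : ℝ, 0 ≤ y ∧ θ y = r)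
    (hθint : MeasureTheory.IntegrableOn (fun y => |Real.log (θ y)|) (Set.Ioc (0:ℝ) 1))
    (A : Matrix (Fin m) (Fin m) ℝ)
    (hAnn : ∀ i j, 0 ≤ A i j)
    (hAirr : ∀ i j, 0 < ((1 + A) ^ (m - 1)) i j)
    (B : Matrix (Fin n) (Fin m) ℝ)
    (hBnn : ∀ k j, 0 ≤ B k j)
    (hBrank : B.rank = m)
    (hBrow : ∀ k, ∃ j, B k j ≠ 0)
    (hBent : ∀ k j, B k j = 0 ∨ 1 ≤ B k j)
    (f : EuclideanSpace ℝ (Fin n) → EuclideanSpace ℝ (Fin n))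
    (hf : ∀ x : EuclideanSpace ℝ (Fin n), ∀ k : Fin n,
      f x k = ∑ i : Fin m, ∑ j : Fin m,
        A i j * (∏ l : Fin n, θ (x l) ^ (B l j)) * (B k i - B k j))
    :
    ∀ tstar : ℝ, 0 ≤ tstar → ∀ x : ℝ → EuclideanSpace ℝ (Fin n),
      (∀ t ∈ Set.Icc (0:ℝ) tstar, HasDerivWithinAt x (f (x t)) (Set.Icc 0 tstar) t) →
      (∀ t ∈ Set.Icc (0:ℝ) tstar, ∀ k, 0 ≤ x t k) →
      ∀ k, 0 < x 0 k → 0 < x tstar k := by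
  intro tstar htstar x hx hxnn k hk0
  have h0mem : (0:ℝ) ∈ Set.Icc (0:ℝ) tstar := ⟨le_refl _, htstar⟩
  have hTmem : tstar ∈ Set.Icc (0:ℝ) tstar := ⟨htstar, le_refl _⟩
  -- continuity of x
  have hxcont : ContinuousOn x (Set.Icc 0 tstar) := fun t ht => (hx t ht).continuousWithinAt
  -- bound on coordinates
  obtain ⟨M, hM⟩ : ∃ M, ∀ t ∈ Set.Icc (0:ℝ) tstar, ‖x t‖ ≤ M :=
    isCompact_Icc.exists_bound_of_continuousOn hxcont
  set M' : ℝ := max M 1 with hM'def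
  have hM'1 : (1:ℝ) ≤ M' := le_max_right _ _
  have hM'0 : (0:ℝ) ≤ M' := le_trans zero_le_one hM'1
  have hcoord : ∀ t ∈ Set.Icc (0:ℝ) tstar, ∀ l, x t l ≤ M' := by
    intro t ht l
    calc x t l ≤ |x t l| := le_abs_self _
    _ ≤ ‖x t‖ := coord_abs_le_norm _ _
    _ ≤ M := hM t ht
    _ ≤ M' := le_max_left _ _
  -- bound on θ over [0, M']
  have hθcont : Continuous θ := hθlip.continuous
  obtain ⟨Θ₀, hΘ₀⟩ : ∃ Θ₀, ∀ y ∈ Set.Icc (0:ℝ) M', θ y ≤ Θ₀ := by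
    obtain ⟨y₀, _, hy₀⟩ := isCompact_Icc.exists_isMaxOn (α := ℝ) ⟨0, by constructor <;> simp [hM'0]⟩
      (hθcont.continuousOn (s := Set.Icc (0:ℝ) M'))
    exact ⟨θ y₀, hy₀⟩
  set Θ : ℝ := max Θ₀ 1 with hΘdef
  have hΘ1 : (1:ℝ) ≤ Θ := le_max_right _ _
  have hΘ0 : (0:ℝ) < Θ := lt_of_lt_of_le one_pos hΘ1
  have hθleΘ : ∀ y, 0 ≤ y → y ≤ M' → θ y ≤ Θ := fun y h1 h2 =>
    le_trans (hΘ₀ y ⟨h1, h2⟩) (le_max_left _ _)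
  -- Lipschitz bound near 0 : θ y ≤ L * y on [0, M']
  obtain ⟨K, s, hs, hK⟩ := hθlip 0
  obtain ⟨δ, hδpos, hδ⟩ := Metric.mem_nhds_iff.mp hs
  set L : ℝ := max (K : ℝ) (2 * Θ / δ) with hLdef
  have hLnn : 0 ≤ L := le_trans (NNReal.coe_nonneg K) (le_max_left _ _)
  have hLθ : ∀ y, 0 ≤ y → y ≤ M' → θ y ≤ L * y := by
    intro y hy0 hyM
    by_cases hy : y ≤ δ / 2
    · have hyb : y ∈ s := hδ (by
        simp only [Metric.mem_ball, dist_zero_right, Real.norm_eq_abs, abs_of_nonneg hy0]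
        linarith)
      have h0b : (0:ℝ) ∈ s := hδ (Metric.mem_ball_self hδpos)
      have := hK.dist_le_mul y hyb 0 h0b
      rw [hθ0, Real.dist_eq, Real.dist_eq, sub_zero, sub_zero, abs_of_nonneg (hθnn y),
        abs_of_nonneg hy0] at this
      calc θ y ≤ (K : ℝ) * y := this
      _ ≤ L * y := mul_le_mul_of_nonneg_right (le_max_left _ _) hy0
    · push_neg at hy
      have hq : 0 ≤ 2 * Θ / δ := by positivity
      calc θ y ≤ Θ := hθleΘ y hy0 hyM
      _ = (2 * Θ / δ) * (δ / 2) := by field_simp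
      _ ≤ (2 * Θ / δ) * y := mul_le_mul_of_nonneg_left (le_of_lt hy) hq
      _ ≤ L * y := mul_le_mul_of_nonneg_right (le_max_right _ _) hy0
  -- bounds on the matrix entries
  set β : ℝ := 1 + ∑ l : Fin n, ∑ j : Fin m, B l j with hβdef
  have hβ1 : (1:ℝ) ≤ β := by
    have : (0:ℝ) ≤ ∑ l : Fin n, ∑ j : Fin m, B l j :=
      Finset.sum_nonneg fun l _ => Finset.sum_nonneg fun j _ => hBnn l j
    linarith
  have hβ0 : (0:ℝ) ≤ β := le_trans zero_le_one hβ1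
  have hBle : ∀ l j, B l j ≤ β := by
    intro l j
    have h1 : B l j ≤ ∑ j' : Fin m, B l j' :=
      Finset.single_le_sum (f := fun j' => B l j') (fun j' _ => hBnn l j') (Finset.mem_univ j)
    have h2 : (∑ j' : Fin m, B l j') ≤ ∑ l' : Fin n, ∑ j' : Fin m, B l' j' :=
      Finset.single_le_sum (f := fun l' => ∑ j' : Fin m, B l' j')
        (fun l' _ => Finset.sum_nonneg fun j' _ => hBnn l' j') (Finset.mem_univ l)
    linarith
  set Am : ℝ := 1 + ∑ i : Fin m, ∑ j : Fin m, A i j with hAmdef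
  have hAm0 : (0:ℝ) ≤ Am := by
    have : (0:ℝ) ≤ ∑ i : Fin m, ∑ j : Fin m, A i j :=
      Finset.sum_nonneg fun i _ => Finset.sum_nonneg fun j _ => hAnn i j
    simp only [hAmdef]; linarith
  have hAle : ∀ i j, A i j ≤ Am := by
    intro i j
    have h1 : A i j ≤ ∑ j' : Fin m, A i j' :=
      Finset.single_le_sum (f := fun j' => A i j') (fun j' _ => hAnn i j') (Finset.mem_univ j)
    have h2 : (∑ j' : Fin m, A i j') ≤ ∑ i' : Fin m, ∑ j' : Fin m, A i' j' :=
      Finset.single_le_sum (f := fun i' => ∑ j' : Fin m, A i' j')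
        (fun i' _ => Finset.sum_nonneg fun j' _ => hAnn i' j') (Finset.mem_univ i)
    simp only [hAmdef]; linarith
  -- constants
  set E : ℝ := Θ ^ β with hEdef
  have hE1 : (1:ℝ) ≤ E := Real.one_le_rpow hΘ1 hβ0
  have hE0 : (0:ℝ) ≤ E := le_trans zero_le_one hE1
  set D : ℝ := E ^ (n : ℕ) with hDdef
  have hD0 : (0:ℝ) ≤ D := pow_nonneg hE0 _
  set C1 : ℝ := Am * E * D * β * L with hC1def
  have hC10 : 0 ≤ C1 := by positivity
  set C : ℝ := (m : ℝ) * (m : ℝ) * C1 with hCdef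
  have hC0 : 0 ≤ C := by positivity
  -- the key lower bound on f
  have hfb : ∀ t ∈ Set.Icc (0:ℝ) tstar, -(C * x t k) ≤ f (x t) k := by
    intro t ht
    have hxk0 : 0 ≤ x t k := hxnn t ht k
    have hθb : ∀ l : Fin n, θ (x t l) ≤ Θ := fun l => hθleΘ _ (hxnn t ht l) (hcoord t ht l)
    have hkey : ∀ i j : Fin m,
        -(C1 * x t k) ≤ A i j * (∏ l : Fin n, θ (x t l) ^ (B l j)) * (B k i - B k j) := by
      intro i j
      set P : ℝ := ∏ l : Fin n, θ (x t l) ^ (B l j) with hPdef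
      have hPnn : 0 ≤ P :=
        Finset.prod_nonneg fun l _ => Real.rpow_nonneg (hθnn _) _
      have hCr : 0 ≤ C1 * x t k := mul_nonneg hC10 hxk0
      rcases hBent k j with h0 | h1
      · have h : 0 ≤ A i j * P * (B k i - B k j) := by
          rw [h0, sub_zero]
          exact mul_nonneg (mul_nonneg (hAnn i j) hPnn) (hBnn k i)
        linarith
      · have hsplit : P = θ (x t k) ^ (B k j) *
            ∏ l ∈ Finset.univ.erase k, θ (x t l) ^ (B l j) :=
          (Finset.mul_prod_erase Finset.univ _ (Finset.mem_univ k)).symm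
        have hrestnn : 0 ≤ ∏ l ∈ Finset.univ.erase k, θ (x t l) ^ (B l j) :=
          Finset.prod_nonneg fun l _ => Real.rpow_nonneg (hθnn _) _
        have hrest : (∏ l ∈ Finset.univ.erase k, θ (x t l) ^ (B l j)) ≤ D := by
          have hcard : (Finset.univ.erase k).card ≤ n := by
            calc (Finset.univ.erase k).card ≤ (Finset.univ : Finset (Fin n)).card :=
                  Finset.card_erase_le
            _ = n := by simp
          calc (∏ l ∈ Finset.univ.erase k, θ (x t l) ^ (B l j))
              ≤ ∏ _l ∈ Finset.univ.erase k, E := by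
                refine Finset.prod_le_prod (fun l _ => Real.rpow_nonneg (hθnn _) _) ?_
                intro l _
                calc θ (x t l) ^ (B l j) ≤ Θ ^ (B l j) :=
                      Real.rpow_le_rpow (hθnn _) (hθb l) (hBnn l j)
                _ ≤ Θ ^ β := Real.rpow_le_rpow_of_exponent_le hΘ1 (hBle l j)
          _ = E ^ (Finset.univ.erase k).card := Finset.prod_const E
          _ ≤ E ^ n := pow_le_pow_right₀ hE1 hcard
        have hhead : θ (x t k) ^ (B k j) ≤ E * (L * x t k) := by
          have hELr : 0 ≤ E * (L * x t k) := by positivity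
          rcases eq_or_lt_of_le (hθnn (x t k)) with hz | hp
          · rw [← hz, Real.zero_rpow (by linarith : B k j ≠ 0)]
            exact hELr
          · have e1 : B k j = 1 + (B k j - 1) := by ring
            have e2 : θ (x t k) ^ (B k j) = θ (x t k) * θ (x t k) ^ (B k j - 1) := by
              rw [e1, Real.rpow_add hp, Real.rpow_one]; ring_nf
            rw [e2]
            have h2 : θ (x t k) ^ (B k j - 1) ≤ E := by
              calc θ (x t k) ^ (B k j - 1) ≤ Θ ^ (B k j - 1) :=
                    Real.rpow_le_rpow (le_of_lt hp) (hθb k) (by linarith)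
              _ ≤ Θ ^ β := Real.rpow_le_rpow_of_exponent_le hΘ1 (by
                    have := hBle k j; linarith)
            have h3 : θ (x t k) ≤ L * x t k := hLθ _ hxk0 (hcoord t ht k)
            calc θ (x t k) * θ (x t k) ^ (B k j - 1) ≤ (L * x t k) * E :=
                  mul_le_mul h3 h2 (Real.rpow_nonneg (hθnn _) _) (by positivity)
            _ = E * (L * x t k) := by ring
        have hPle : P ≤ E * (L * x t k) * D := by
          rw [hsplit]
          exact mul_le_mul hhead hrest hrestnn (by positivity)
        have hd1 : -β ≤ B k i - B k j := by
          have := hBle k j; have := hBnn k i; linarith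
        rcases le_or_gt 0 (B k i - B k j) with hd | hd
        · have h : 0 ≤ A i j * P * (B k i - B k j) :=
            mul_nonneg (mul_nonneg (hAnn i j) hPnn) hd
          linarith
        · have hAP : A i j * P ≤ Am * (E * (L * x t k) * D) :=
            mul_le_mul (hAle i j) hPle hPnn hAm0
          calc -(C1 * x t k) = (Am * (E * (L * x t k) * D)) * (-β) := by
                rw [hC1def]; ring
          _ ≤ (Am * (E * (L * x t k) * D)) * (B k i - B k j) :=
                mul_le_mul_of_nonneg_left hd1 (by positivity)
          _ ≤ (A i j * P) * (B k i - B k j) :=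
                mul_le_mul_of_nonpos_right hAP (le_of_lt hd)
    rw [hf]
    calc -(C * x t k) = ∑ _i : Fin m, ∑ _j : Fin m, -(C1 * x t k) := by
          simp [Finset.sum_const, hCdef]; ring
    _ ≤ _ := Finset.sum_le_sum fun i _ => Finset.sum_le_sum fun j _ => hkey i j
  -- the auxiliary function g
  set g : ℝ → ℝ := fun s => Real.exp (C * s) * x s k with hgdef
  have hgmono : MonotoneOn g (Set.Icc (0:ℝ) tstar) := by
    apply monotoneOn_of_hasDerivWithinAt_nonneg (convex_Icc 0 tstar)
      (f' := fun t => Real.exp (C * t) * C * x t k + Real.exp (C * t) * f (x t) k)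
    · exact ((Real.continuous_exp.comp (continuous_const.mul continuous_id)).continuousOn).mul
        ((EuclideanSpace.proj k).continuous.comp_continuousOn hxcont)
    · intro t ht
      have ht' : t ∈ Set.Icc (0:ℝ) tstar := interior_subset ht
      have hxk : HasDerivWithinAt (fun s => x s k) (f (x t) k) (Set.Icc 0 tstar) t :=
        ((EuclideanSpace.proj k :
          EuclideanSpace ℝ (Fin n) →L[ℝ] ℝ).hasFDerivAt).comp_hasDerivWithinAt t (hx t ht')
      have hexp : HasDerivAt (fun s : ℝ => Real.exp (C * s)) (Real.exp (C * t) * C) t := by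
        have h := (Real.hasDerivAt_exp (C * t)).comp t ((hasDerivAt_id t).const_mul C)
        rw [mul_one] at h
        exact h
      exact ((hexp.hasDerivWithinAt.mul hxk).mono interior_subset)
    · intro t ht
      have ht' : t ∈ Set.Icc (0:ℝ) tstar := interior_subset ht
      have h1 := hfb t ht'
      have h2 := Real.exp_pos (C * t)
      nlinarith [hxnn t ht' k]
  have hg0 : g 0 = x 0 k := by simp [hgdef]
  have := hgmono h0mem hTmem htstar
  rw [hg0] at this
  have hgT : 0 < Real.exp (C * tstar) * x tstar k := lt_of_lt_of_le hk0 this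
  nlinarith [Real.exp_pos (C * tstar)]
end

section
/- Consider any solution x : [0, T] → ℝⁿ of the system with x(0) ∈ [0,∞)ⁿ. Suppose there is some j ∈ {1,…,m} such that x_ℓ(0) > 0 for all ℓ ∈ S_j. Then x(t) ∈ (0,∞)ⁿ for all t ∈ (0, T]. -/
open Set Real

private lemma expMono (a b lam β : ℝ) (hlam : lam ≠ 0) (u u' : ℝ → ℝ)
    (hu : ∀ t ∈ Set.Icc a b, HasDerivWithinAt u (u' t) (Set.Icc a b) t)
    (hlow : ∀ t ∈ Set.Icc a b, β - lam * u t ≤ u' t) :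
    MonotoneOn (fun t => Real.exp (lam * t) * (u t - β / lam)) (Set.Icc a b) := by
  have hcont : ContinuousOn u (Set.Icc a b) := fun t ht => (hu t ht).continuousWithinAt
  apply monotoneOn_of_hasDerivWithinAt_nonneg (f' := fun t =>
      Real.exp (lam * t) * lam * (u t - β / lam) + Real.exp (lam * t) * u' t)
    (convex_Icc a b)
  · exact ((Real.continuous_exp.comp (continuous_const.mul continuous_id)).continuousOn).mul
      (hcont.sub continuousOn_const)
  · intro t ht
    rw [interior_Icc] at ht ⊢
    have hmem : t ∈ Set.Icc a b := ⟨ht.1.le, ht.2.le⟩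
    have he : HasDerivAt (fun s => Real.exp (lam * s)) (Real.exp (lam * t) * lam) t := by
      simpa using ((hasDerivAt_id t).const_mul lam).exp
    have hu' : HasDerivWithinAt u (u' t) (Set.Ioo a b) t :=
      (hu t hmem).mono Set.Ioo_subset_Icc_self
    exact (he.hasDerivWithinAt.mul (hu'.sub_const (β / lam)))
  · intro t ht
    rw [interior_Icc] at ht
    have hmem : t ∈ Set.Icc a b := ⟨ht.1.le, ht.2.le⟩
    have hl := hlow t hmem
    have hexp := Real.exp_pos (lam * t)
    have key : lam * (u t - β / lam) = lam * u t - β := by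
      field_simp
    nlinarith [hexp, hl]

private lemma coord_abs_le (n : ℕ) (y : EuclideanSpace ℝ (Fin n)) (l : Fin n) : |y l| ≤ ‖y‖ := by
  rw [EuclideanSpace.norm_eq, ← Real.sqrt_sq_eq_abs]
  apply Real.sqrt_le_sqrt
  calc y l ^ 2 = ‖y l‖ ^ 2 := by rw [Real.norm_eq_abs, sq_abs]
    _ ≤ ∑ i, ‖y i‖ ^ 2 := Finset.single_le_sum (f := fun i => ‖y i‖ ^ 2) (fun i _ => by positivity) (Finset.mem_univ l)

private lemma pow_entry_nonneg {m : ℕ} (A : Matrix (Fin m) (Fin m) ℝ) (hA : ∀ i j, 0 ≤ A i j) :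
    ∀ r (i j : Fin m), 0 ≤ (((1 + A) ^ r : Matrix (Fin m) (Fin m) ℝ)) i j := by
  intro r
  induction r with
  | zero =>
      intro i j
      simp only [pow_zero, Matrix.one_apply]
      split <;> norm_num
  | succ r ih =>
      intro i j
      rw [pow_succ', Matrix.mul_apply]
      refine Finset.sum_nonneg fun j' _ => mul_nonneg ?_ (ih j' j)
      have : (1 + A) i j' = (1 : Matrix (Fin m) (Fin m) ℝ) i j' + A i j' := rfl
      rw [this, Matrix.one_apply]
      split <;> linarith [hA i j']

set_option maxHeartbeats 4000000 in
theorem stmt_14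
    (n m : ℕ) (hm : 0 < m) (hmn : m ≤ n)
    (θ : ℝ → ℝ)
    (hθlip : LocallyLipschitz θ)
    (hθ0 : θ 0 = 0)
    (hθnn : ∀ y : ℝ, 0 ≤ θ y)
    (hθmono : StrictMonoOn θ (Set.Ici (0:ℝ)))
    (hθonto : ∀ r : ℝ, 0 ≤ r → ∃ y : ℝ, 0 ≤ y ∧ θ y = r)
    (hθint : MeasureTheory.IntegrableOn (fun y => |Real.log (θ y)|) (Set.Ioc (0:ℝ) 1))
    (A : Matrix (Fin m) (Fin m) ℝ)
    (hAnn : ∀ i j, 0 ≤ A i j)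
    (hAirr : ∀ i j, 0 < ((1 + A) ^ (m - 1)) i j)
    (B : Matrix (Fin n) (Fin m) ℝ)
    (hBnn : ∀ k j, 0 ≤ B k j)
    (hBrank : B.rank = m)
    (hBrow : ∀ k, ∃ j, B k j ≠ 0)
    (hBent : ∀ k j, B k j = 0 ∨ 1 ≤ B k j)
    (f : EuclideanSpace ℝ (Fin n) → EuclideanSpace ℝ (Fin n))
    (hf : ∀ x : EuclideanSpace ℝ (Fin n), ∀ k : Fin n,
      f x k = ∑ i : Fin m, ∑ j : Fin m,
        A i j * (∏ l : Fin n, θ (x l) ^ (B l j)) * (B k i - B k j))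
    :
    ∀ T : ℝ, 0 ≤ T → ∀ x : ℝ → EuclideanSpace ℝ (Fin n),
      (∀ t ∈ Set.Icc (0:ℝ) T, HasDerivWithinAt x (f (x t)) (Set.Icc 0 T) t) →
      (∀ k, 0 ≤ x 0 k) →
      (∃ j : Fin m, ∀ l, 0 < B l j → 0 < x 0 l) →
      ∀ t ∈ Set.Ioc (0:ℝ) T, ∀ k, 0 < x t k := by
  intro T hT x hx hx0 hj
  obtain ⟨j₀, hj₀⟩ := hj
  -- coordinate derivatives
  have hX : ∀ (k : Fin n), ∀ t ∈ Set.Icc (0:ℝ) T,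
      HasDerivWithinAt (fun s => x s k) (f (x t) k) (Set.Icc 0 T) t := by
    intro k t ht
    have := (EuclideanSpace.proj (𝕜 := ℝ) k).hasFDerivAt.comp_hasDerivWithinAt t (hx t ht)
    exact this
  have hXc : ∀ k, ContinuousOn (fun s => x s k) (Set.Icc (0:ℝ) T) :=
    fun k t ht => (hX k t ht).continuousWithinAt
  have hxc : ContinuousOn x (Set.Icc (0:ℝ) T) := fun t ht => (hx t ht).continuousWithinAt
  -- uniform bound on coordinates
  obtain ⟨M0, hM0⟩ := isCompact_Icc.exists_bound_of_continuousOn hxc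
  set M : ℝ := max M0 1 with hMdef
  have hM1 : (1:ℝ) ≤ M := le_max_right _ _
  have hM : ∀ t ∈ Set.Icc (0:ℝ) T, ∀ l, |x t l| ≤ M := fun t ht l =>
    le_trans (coord_abs_le n (x t) l) (le_trans (hM0 t ht) (le_max_left _ _))
  -- bound for θ on [-M, M]
  obtain ⟨Θ, hΘ⟩ := isCompact_Icc.exists_bound_of_continuousOn
    (hθlip.continuous.continuousOn (s := Set.Icc (-M) M))
  have hΘ0 : 0 ≤ Θ := le_trans (norm_nonneg _) (hΘ 0 (by constructor <;> linarith))
  have hθub : ∀ y : ℝ, |y| ≤ M → θ y ≤ Θ := fun y hy =>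
    le_trans (le_abs_self _) (hΘ y (abs_le.mp hy))
  -- Lipschitz bound near 0
  obtain ⟨K, U, hU, hK⟩ := hθlip 0
  obtain ⟨ε, hε, hball⟩ := Metric.mem_nhds_iff.mp hU
  set L : ℝ := max (max (K : ℝ) (Θ / ε)) 1 with hLdef
  have hL1 : (1:ℝ) ≤ L := le_max_right _ _
  have hθle : ∀ y : ℝ, |y| ≤ M → θ y ≤ L * |y| := by
    intro y hy
    rcases lt_or_ge (|y|) ε with h | h
    · have hyU : y ∈ U := hball (by simpa [Metric.mem_ball, Real.dist_eq] using h)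
      have h0U : (0:ℝ) ∈ U := hball (by simpa [Metric.mem_ball] using hε)
      have hd := hK.dist_le_mul y hyU 0 h0U
      rw [hθ0, Real.dist_eq, Real.dist_eq, sub_zero, sub_zero] at hd
      have h1 : θ y ≤ (K : ℝ) * |y| := le_trans (le_abs_self _) hd
      have h2 : (K : ℝ) ≤ L := le_trans (le_max_left _ _) (le_max_left _ _)
      nlinarith [abs_nonneg y]
    · have h1 : θ y ≤ Θ := hθub y hy
      have h2 : Θ / ε ≤ L := le_trans (le_max_right _ _) (le_max_left _ _)
      have h3 : Θ = (Θ / ε) * ε := by field_simp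
      calc θ y ≤ Θ := h1
        _ = (Θ / ε) * ε := h3
        _ ≤ (Θ / ε) * |y| := mul_le_mul_of_nonneg_left h (by positivity)
        _ ≤ L * |y| := mul_le_mul_of_nonneg_right h2 (abs_nonneg _)
  -- R bound for θ along trajectory
  set R : ℝ := max 1 Θ with hRdef
  have hR1 : (1:ℝ) ≤ R := le_max_left _ _
  have hR0 : (0:ℝ) < R := lt_of_lt_of_le one_pos hR1
  have hθR : ∀ t ∈ Set.Icc (0:ℝ) T, ∀ l, θ (x t l) ≤ R := fun t ht l =>
    le_trans (hθub _ (hM t ht l)) (le_max_right _ _)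
  -- bound on entries of B
  set Bb : ℝ := 1 + ∑ l : Fin n, ∑ j : Fin m, B l j with hBbdef
  have hBsum : (0:ℝ) ≤ ∑ l : Fin n, ∑ j : Fin m, B l j :=
    Finset.sum_nonneg fun l _ => Finset.sum_nonneg fun j _ => hBnn l j
  have hBb1 : (1:ℝ) ≤ Bb := by simp only [hBbdef]; linarith
  have hBb0 : (0:ℝ) < Bb := lt_of_lt_of_le one_pos hBb1
  have hBble : ∀ l j, B l j ≤ Bb := by
    intro l j
    have h1 : B l j ≤ ∑ j' : Fin m, B l j' :=
      Finset.single_le_sum (fun j' _ => hBnn l j') (Finset.mem_univ j)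
    have h2 : (∑ j' : Fin m, B l j') ≤ ∑ l' : Fin n, ∑ j' : Fin m, B l' j' :=
      Finset.single_le_sum (f := fun l' => ∑ j' : Fin m, B l' j')
        (fun l' _ => Finset.sum_nonneg fun j' _ => hBnn l' j') (Finset.mem_univ l)
    simp only [hBbdef]; linarith
  -- monomials
  set P : Fin m → ℝ → ℝ := fun j s => ∏ l : Fin n, θ (x s l) ^ (B l j) with hPdef
  have hPnn : ∀ j s, 0 ≤ P j s := fun j s =>
    Finset.prod_nonneg fun l _ => Real.rpow_nonneg (hθnn _) _
  have hRb1 : (1:ℝ) ≤ R ^ Bb := by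
    calc (1:ℝ) = R ^ (0:ℝ) := (Real.rpow_zero R).symm
      _ ≤ R ^ Bb := Real.rpow_le_rpow_of_exponent_le hR1 (by linarith)
  set Q : ℝ := (R ^ Bb) ^ n with hQdef
  have hQ1 : (1:ℝ) ≤ Q := one_le_pow₀ hRb1
  have hfac : ∀ s ∈ Set.Icc (0:ℝ) T, ∀ (l : Fin n) (b : ℝ), 0 ≤ b → b ≤ Bb →
      θ (x s l) ^ b ≤ R ^ Bb := by
    intro s hs l b hb hbB
    calc θ (x s l) ^ b ≤ R ^ b := Real.rpow_le_rpow (hθnn _) (hθR s hs l) hb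
      _ ≤ R ^ Bb := Real.rpow_le_rpow_of_exponent_le hR1 hbB
  -- split bound for monomials containing θ (x s k)
  have hPsplit : ∀ s ∈ Set.Icc (0:ℝ) T, ∀ (k : Fin n) (j : Fin m), 1 ≤ B k j →
      P j s ≤ θ (x s k) * (R ^ Bb * Q) := by
    intro s hs k j hkj
    have hsplit : P j s = θ (x s k) ^ (B k j) * ∏ l ∈ Finset.univ.erase k, θ (x s l) ^ (B l j) := by
      rw [hPdef]
      exact (Finset.mul_prod_erase Finset.univ _ (Finset.mem_univ k)).symm
    have hrest : (∏ l ∈ Finset.univ.erase k, θ (x s l) ^ (B l j)) ≤ Q := by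
      calc (∏ l ∈ Finset.univ.erase k, θ (x s l) ^ (B l j))
          ≤ ∏ _l ∈ Finset.univ.erase k, R ^ Bb := by
            apply Finset.prod_le_prod
            · exact fun l _ => Real.rpow_nonneg (hθnn _) _
            · exact fun l _ => hfac s hs l (B l j) (hBnn l j) (hBble l j)
        _ = (R ^ Bb) ^ ((Finset.univ.erase k).card) := by rw [Finset.prod_const]
        _ ≤ Q := by
            rw [hQdef]
            apply pow_le_pow_right₀ hRb1
            calc (Finset.univ.erase k).card ≤ Finset.univ.card := Finset.card_erase_le.trans le_rfl
              _ = n := by simp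
    have hrestnn : (0:ℝ) ≤ ∏ l ∈ Finset.univ.erase k, θ (x s l) ^ (B l j) :=
      Finset.prod_nonneg fun l _ => Real.rpow_nonneg (hθnn _) _
    have hhead : θ (x s k) ^ (B k j) ≤ θ (x s k) * R ^ Bb := by
      rcases eq_or_lt_of_le (hθnn (x s k)) with h0 | hpos
      · rw [← h0, Real.zero_rpow (by linarith : B k j ≠ 0)]
        simp
      · have hsp : θ (x s k) ^ (B k j) = θ (x s k) * θ (x s k) ^ (B k j - 1) := by
          rw [show B k j = 1 + (B k j - 1) by ring, Real.rpow_add hpos, Real.rpow_one]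
          ring_nf
        rw [hsp]
        apply mul_le_mul_of_nonneg_left _ (hθnn _)
        calc θ (x s k) ^ (B k j - 1) ≤ R ^ (B k j - 1) :=
              Real.rpow_le_rpow (hθnn _) (hθR s hs k) (by linarith)
          _ ≤ R ^ Bb := Real.rpow_le_rpow_of_exponent_le hR1 (by linarith [hBble k j])
    calc P j s = θ (x s k) ^ (B k j) * ∏ l ∈ Finset.univ.erase k, θ (x s l) ^ (B l j) := hsplit
      _ ≤ (θ (x s k) * R ^ Bb) * Q := by
          apply mul_le_mul hhead hrest hrestnn
          exact mul_nonneg (hθnn _) (by linarith)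
      _ = θ (x s k) * (R ^ Bb * Q) := by ring
  -- constants
  set D : ℝ := Bb * (R ^ Bb * Q) with hDdef
  have hD0 : (0:ℝ) ≤ D := mul_nonneg (by linarith) (mul_nonneg (by linarith) (by linarith))
  set SA : ℝ := ∑ i : Fin m, ∑ j : Fin m, A i j with hSAdef
  have hSA0 : (0:ℝ) ≤ SA := Finset.sum_nonneg fun i _ => Finset.sum_nonneg fun j _ => hAnn i j
  set C₀ : ℝ := SA * D with hC₀def
  have hC₀0 : (0:ℝ) ≤ C₀ := mul_nonneg hSA0 hD0
  set C : ℝ := C₀ * L + 1 with hCdef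
  have hC0 : (0:ℝ) < C := by positivity
  have hCne : C ≠ 0 := ne_of_gt hC0
  have hCge : C₀ * L ≤ C := by linarith
  clear_value M L R Bb Q D SA C₀ C
  -- lower bound on each term
  have htermlow : ∀ s ∈ Set.Icc (0:ℝ) T, ∀ (k : Fin n) (i j : Fin m),
      -((A i j * D) * θ (x s k)) ≤ A i j * P j s * (B k i - B k j) := by
    intro s hs k i j
    rcases hBent k j with hkj | hkj
    · have h1 : 0 ≤ A i j * P j s * (B k i - B k j) := by
        rw [hkj, sub_zero]
        exact mul_nonneg (mul_nonneg (hAnn i j) (hPnn j s)) (hBnn k i)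
      have h2 : 0 ≤ (A i j * D) * θ (x s k) :=
        mul_nonneg (mul_nonneg (hAnn i j) hD0) (hθnn _)
      linarith
    · have hkey := hPsplit s hs k j hkj
      have h1 : A i j * P j s * (B k i - B k j) ≥ A i j * P j s * (0 - B k j) := by
        apply mul_le_mul_of_nonneg_left _ (mul_nonneg (hAnn i j) (hPnn j s))
        have := hBnn k i
        linarith
      have h2 : A i j * P j s * (0 - B k j) = -(A i j * (B k j) * P j s) := by ring
      have h3 : A i j * (B k j) * P j s ≤ A i j * Bb * (θ (x s k) * (R ^ Bb * Q)) := by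
        apply mul_le_mul
        · exact mul_le_mul_of_nonneg_left (hBble k j) (hAnn i j)
        · exact hkey
        · exact hPnn j s
        · exact mul_nonneg (hAnn i j) (by linarith)
      have h4 : A i j * Bb * (θ (x s k) * (R ^ Bb * Q)) = (A i j * D) * θ (x s k) := by
        rw [hDdef]; ring
      linarith
  -- global lower bound on f
  have hsumpull : ∀ c : ℝ, (∑ i : Fin m, ∑ j : Fin m, A i j * c) = SA * c := by
    intro c
    rw [hSAdef, Finset.sum_mul]
    exact Finset.sum_congr rfl fun i _ => by rw [Finset.sum_mul]
  have hflow : ∀ s ∈ Set.Icc (0:ℝ) T, ∀ k, -(C₀ * θ (x s k)) ≤ f (x s) k := by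
    intro s hs k
    rw [hf]
    have h := Finset.sum_le_sum (s := Finset.univ) (fun i (_ : i ∈ Finset.univ) =>
      Finset.sum_le_sum (s := Finset.univ) (fun j (_ : j ∈ Finset.univ) => htermlow s hs k i j))
    have heq : (∑ i : Fin m, ∑ j : Fin m, -((A i j * D) * θ (x s k)))
        = -(C₀ * θ (x s k)) := by
      have : (∑ i : Fin m, ∑ j : Fin m, -((A i j * D) * θ (x s k)))
          = -(∑ i : Fin m, ∑ j : Fin m, A i j * (D * θ (x s k))) := by
        rw [← Finset.sum_neg_distrib]
        refine Finset.sum_congr rfl fun i _ => ?_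
        rw [← Finset.sum_neg_distrib]
        exact Finset.sum_congr rfl fun j _ => by ring
      rw [this, hsumpull, hC₀def]
      ring
    rw [heq] at h
    exact h
  have step1 : ∀ t ∈ Set.Icc (0:ℝ) T, ∀ k, 0 ≤ x t k := by
    intro t2 ht2 k
    by_contra hneg
    push_neg at hneg
    set S : Set ℝ := {t | t ∈ Set.Icc (0:ℝ) t2 ∧ 0 ≤ x t k} with hSdef
    have hS0 : (0:ℝ) ∈ S := ⟨⟨le_rfl, ht2.1⟩, hx0 k⟩
    have hsub0 : Set.Icc (0:ℝ) t2 ⊆ Set.Icc (0:ℝ) T := Set.Icc_subset_Icc le_rfl ht2.2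
    have hScl : IsClosed S := by
      have hSeq : S = Set.Icc (0:ℝ) t2 ∩ (fun t => x t k) ⁻¹' Set.Ici 0 := by
        ext s
        simp only [hSdef, Set.mem_setOf_eq, Set.mem_inter_iff, Set.mem_preimage, Set.mem_Ici]
      rw [hSeq]
      exact ContinuousOn.preimage_isClosed_of_isClosed ((hXc k).mono hsub0) isClosed_Icc isClosed_Ici
    have hScp : IsCompact S := isCompact_Icc.of_isClosed_subset hScl (fun t ht => ht.1)
    set t1 : ℝ := sSup S with ht1def
    have ht1S : t1 ∈ S := hScp.sSup_mem ⟨0, hS0⟩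
    have ht1mem : t1 ∈ Set.Icc 0 t2 := ht1S.1
    have ht1lt : t1 < t2 := lt_of_le_of_ne ht1mem.2 (fun h => absurd (h ▸ ht1S.2) (not_le.mpr hneg))
    have hbdd : BddAbove S := hScp.bddAbove
    have hneg' : ∀ s ∈ Set.Ioc t1 t2, x s k < 0 := by
      intro s hs
      by_contra hcon
      push_neg at hcon
      have hmem : s ∈ S := ⟨⟨le_trans ht1mem.1 hs.1.le, hs.2⟩, hcon⟩
      exact absurd (le_csSup hbdd hmem) (not_le.mpr hs.1)
    have hsub2 : Set.Icc t1 t2 ⊆ Set.Icc (0:ℝ) T := Set.Icc_subset_Icc ht1mem.1 ht2.2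
    have ht1le : x t1 k ≤ 0 := by
      have hcw : ContinuousWithinAt (fun s => x s k) (Set.Ioc t1 t2) t1 :=
        ((hXc k) t1 (hsub2 ⟨le_rfl, ht1lt.le⟩)).mono (fun s hs => hsub2 ⟨hs.1.le, hs.2⟩)
      have hNB : (nhdsWithin t1 (Set.Ioc t1 t2)).NeBot := by
        rw [← mem_closure_iff_nhdsWithin_neBot, closure_Ioc (ne_of_lt ht1lt)]
        exact ⟨le_rfl, ht1lt.le⟩
      exact le_of_tendsto hcw (Filter.eventually_of_mem self_mem_nhdsWithin
        (fun s hs => (hneg' s hs).le))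
    have ht1eq : x t1 k = 0 := le_antisymm ht1le ht1S.2
    have hlowS : ∀ s ∈ Set.Icc t1 t2, 0 - (-C) * x s k ≤ f (x s) k := by
      intro s hs
      have hsT : s ∈ Set.Icc (0:ℝ) T := hsub2 hs
      have h1 := hflow s hsT k
      have h2 := hθle (x s k) (hM s hsT k)
      have h3 : x s k ≤ 0 := by
        rcases eq_or_lt_of_le hs.1 with h | h
        · rw [← h]; exact ht1le
        · exact (hneg' s ⟨h, hs.2⟩).le
      rw [abs_of_nonpos h3] at h2
      have h4 := mul_le_mul_of_nonneg_left h2 hC₀0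
      have e1 := mul_le_mul_of_nonneg_right hCge (neg_nonneg.mpr h3)
      linarith [h1, h4, e1]
    have hmono := expMono t1 t2 (-C) 0 (by simpa using hCne) (fun s => x s k)
      (fun s => f (x s) k) (fun s hs => (hX k s (hsub2 hs)).mono hsub2) hlowS
    have h12 := hmono (Set.left_mem_Icc.mpr ht1lt.le) (Set.right_mem_Icc.mpr ht1lt.le) ht1lt.le
    simp only [zero_div, sub_zero, ht1eq, mul_zero] at h12
    linarith [h12, mul_pos (Real.exp_pos (-C * t2)) (neg_pos.mpr hneg)]
  have step2 : ∀ (k : Fin n) (t0 t1 : ℝ), 0 ≤ t0 → t0 ≤ t1 → t1 ≤ T →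
      0 < x t0 k → 0 < x t1 k := by
    intro k t0 t1 h0 h01 h1T hpos
    have hsub2 : Set.Icc t0 t1 ⊆ Set.Icc (0:ℝ) T := Set.Icc_subset_Icc h0 h1T
    have hlowS : ∀ s ∈ Set.Icc t0 t1, 0 - C * x s k ≤ f (x s) k := by
      intro s hs
      have hsT := hsub2 hs
      have h1 := hflow s hsT k
      have h2 := hθle (x s k) (hM s hsT k)
      have h3 : 0 ≤ x s k := step1 s hsT k
      rw [abs_of_nonneg h3] at h2
      have h4 := mul_le_mul_of_nonneg_left h2 hC₀0
      have e1 := mul_le_mul_of_nonneg_right hCge h3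
      linarith [h1, h4, e1]
    have hmono := expMono t0 t1 C 0 hCne (fun s => x s k) (fun s => f (x s) k)
      (fun s hs => (hX k s (hsub2 hs)).mono hsub2) hlowS
    have h12 := hmono (Set.left_mem_Icc.mpr h01) (Set.right_mem_Icc.mpr h01) h01
    simp only [zero_div, sub_zero] at h12
    by_contra hcon
    push_neg at hcon
    have e2 := mul_nonneg (Real.exp_pos (C * t1)).le (neg_nonneg.mpr hcon)
    linarith [h12, mul_pos (Real.exp_pos (C * t0)) hpos, e2]
  have step3 : ∀ (i j : Fin m), 0 < A i j → ∀ (t0 t : ℝ), 0 ≤ t0 → t0 < t → t ≤ T →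
      (∀ l, 0 < B l j → 0 < x t0 l) → ∀ k, 0 < B k i → 0 < x t k := by
    intro i j hAij t0 t h0 h0t htT hSj k hki
    have hkige : 1 ≤ B k i := by
      rcases hBent k i with h | h
      · rw [h] at hki; exact absurd hki (lt_irrefl 0)
      · exact h
    rcases hBent k j with hkj | hkj
    swap
    · exact step2 k t0 t h0 h0t.le htT (hSj k (by linarith))
    have hsub2 : Set.Icc t0 t ⊆ Set.Icc (0:ℝ) T := Set.Icc_subset_Icc h0 htT
    have hSjpos : ∀ l, 0 < B l j → ∀ s ∈ Set.Icc t0 t, 0 < x s l := fun l hl s hs =>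
      step2 l t0 s h0 hs.1 (le_trans hs.2 htT) (hSj l hl)
    have hPc : ContinuousOn (fun s => P j s) (Set.Icc t0 t) := by
      rw [hPdef]
      apply continuousOn_finset_prod
      intro l _
      have hrc : Continuous (fun a : ℝ => a ^ (B l j)) :=
        Real.continuous_rpow_const (hBnn l j)
      exact hrc.comp_continuousOn
        (hθlip.continuous.comp_continuousOn ((hXc l).mono hsub2))
    obtain ⟨s₀, hs₀mem, hs₀min⟩ := isCompact_Icc.exists_isMinOn (Set.nonempty_Icc.mpr h0t.le) hPc
    set c : ℝ := P j s₀ with hcdef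
    have hc : 0 < c := by
      rw [hcdef, hPdef]
      apply Finset.prod_pos
      intro l _
      rcases hBent l j with h | h
      · rw [h, Real.rpow_zero]; norm_num
      · have hxl : 0 < x s₀ l := hSjpos l (by linarith) s₀ hs₀mem
        have hθl : 0 < θ (x s₀ l) := by
          have := hθmono (Set.mem_Ici.mpr le_rfl) (Set.mem_Ici.mpr hxl.le) hxl
          rwa [hθ0] at this
        exact Real.rpow_pos_of_pos hθl _
    clear_value c
    set β : ℝ := A i j * c with hβdef
    have hβ : 0 < β := by rw [hβdef]; exact mul_pos hAij hc
    clear_value β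
    have hlowS : ∀ s ∈ Set.Icc t0 t, β - C * x s k ≤ f (x s) k := by
      intro s hs
      have hsT := hsub2 hs
      have h1 : ∀ i' j', 0 ≤ A i' j' * P j' s * (B k i' - B k j') + (A i' j' * D) * θ (x s k) := by
        intro i' j'
        have h := htermlow s hsT k i' j'
        linarith
      have h2 : A i j * P j s * (B k i - B k j) + (A i j * D) * θ (x s k) ≤
          ∑ i' : Fin m, ∑ j' : Fin m,
            (A i' j' * P j' s * (B k i' - B k j') + (A i' j' * D) * θ (x s k)) := by
        calc A i j * P j s * (B k i - B k j) + (A i j * D) * θ (x s k)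
            ≤ ∑ j' : Fin m, (A i j' * P j' s * (B k i - B k j') + (A i j' * D) * θ (x s k)) :=
              Finset.single_le_sum
                (f := fun j' => A i j' * P j' s * (B k i - B k j') + (A i j' * D) * θ (x s k))
                (fun j' _ => h1 i j') (Finset.mem_univ j)
          _ ≤ ∑ i' : Fin m, ∑ j' : Fin m,
                (A i' j' * P j' s * (B k i' - B k j') + (A i' j' * D) * θ (x s k)) :=
              Finset.single_le_sum
                (f := fun i' => ∑ j' : Fin m,
                  (A i' j' * P j' s * (B k i' - B k j') + (A i' j' * D) * θ (x s k)))
                (fun i' _ => Finset.sum_nonneg fun j' _ => h1 i' j') (Finset.mem_univ i)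
      have h3 : (∑ i' : Fin m, ∑ j' : Fin m,
            (A i' j' * P j' s * (B k i' - B k j') + (A i' j' * D) * θ (x s k)))
          = f (x s) k + C₀ * θ (x s k) := by
        have e1 : (∑ i' : Fin m, ∑ j' : Fin m,
              (A i' j' * P j' s * (B k i' - B k j') + (A i' j' * D) * θ (x s k)))
            = (∑ i' : Fin m, ∑ j' : Fin m, A i' j' * P j' s * (B k i' - B k j'))
              + (∑ i' : Fin m, ∑ j' : Fin m, A i' j' * (D * θ (x s k))) := by
          rw [← Finset.sum_add_distrib]
          refine Finset.sum_congr rfl fun i' _ => ?_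
          rw [← Finset.sum_add_distrib]
          exact Finset.sum_congr rfl fun j' _ => by ring
        rw [e1, hsumpull (D * θ (x s k)), hf]
        simp only [hPdef, hC₀def]
        ring
      rw [h3] at h2
      have hPge : c ≤ P j s := by rw [hcdef]; exact isMinOn_iff.mp hs₀min s hs
      have h5 : β ≤ A i j * P j s * (B k i - B k j) := by
        rw [hβdef, hkj, sub_zero]
        have e2 := mul_le_mul_of_nonneg_left hPge hAij.le
        have e3 := mul_le_mul_of_nonneg_left hkige (mul_nonneg hAij.le (hPnn j s))
        linarith [e2, e3]
      have h6 := hθle (x s k) (hM s hsT k)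
      have h7 : 0 ≤ x s k := step1 s hsT k
      rw [abs_of_nonneg h7] at h6
      have h8 := mul_le_mul_of_nonneg_left h6 hC₀0
      have h9 : 0 ≤ (A i j * D) * θ (x s k) := mul_nonneg (mul_nonneg hAij.le hD0) (hθnn _)
      have e1 := mul_le_mul_of_nonneg_right hCge h7
      linarith [h2, h5, h8, h9, e1]
    have hmono := expMono t0 t C β hCne (fun s => x s k) (fun s => f (x s) k)
      (fun s hs => (hX k s (hsub2 hs)).mono hsub2) hlowS
    have h12 := hmono (Set.left_mem_Icc.mpr h0t.le) (Set.right_mem_Icc.mpr h0t.le) h0t.le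
    dsimp only at h12
    have hx0k : 0 ≤ x t0 k := step1 t0 (hsub2 (Set.left_mem_Icc.mpr h0t.le)) k
    have hβC : 0 < β / C := div_pos hβ hC0
    have hee : Real.exp (C * t0) < Real.exp (C * t) :=
      Real.exp_lt_exp.mpr (mul_lt_mul_of_pos_left h0t hC0)
    by_contra hcon
    push_neg at hcon
    linarith [h12, mul_pos hβC (sub_pos.mpr hee),
      mul_nonneg (Real.exp_pos (C * t0)).le hx0k,
      mul_nonneg (Real.exp_pos (C * t)).le (neg_nonneg.mpr hcon)]
  have claim : ∀ r : ℕ, ∀ i : Fin m, 0 < (((1 + A) ^ r : Matrix (Fin m) (Fin m) ℝ)) i j₀ →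
      ∀ t ∈ Set.Ioc (0:ℝ) T, ∀ k, 0 < B k i → 0 < x t k := by
    intro r
    induction r with
    | zero =>
        intro i hi t ht k hk
        have hij : i = j₀ := by
          by_contra hne
          rw [pow_zero, Matrix.one_apply, if_neg hne] at hi
          exact absurd hi (lt_irrefl 0)
        subst hij
        exact step2 k 0 t le_rfl ht.1.le ht.2 (hj₀ k hk)
    | succ r ih =>
        intro i hi t ht k hk
        rw [pow_succ', Matrix.mul_apply] at hi
        have hex : ∃ j' ∈ Finset.univ, (0:ℝ) <
            (1 + A) i j' * (((1 + A) ^ r : Matrix (Fin m) (Fin m) ℝ)) j' j₀ := by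
          apply Finset.exists_lt_of_sum_lt (f := fun _ => (0:ℝ))
          simpa using hi
        obtain ⟨j', _, hj'⟩ := hex
        have h2 : 0 ≤ (((1 + A) ^ r : Matrix (Fin m) (Fin m) ℝ)) j' j₀ :=
          pow_entry_nonneg A hAnn r j' j₀
        have h1 : 0 ≤ (1 + A) i j' := by
          have := pow_entry_nonneg A hAnn 1 i j'
          rwa [pow_one] at this
        have hq : 0 < (((1 + A) ^ r : Matrix (Fin m) (Fin m) ℝ)) j' j₀ := by
          rcases h2.eq_or_lt with h | h
          · rw [← h, mul_zero] at hj'; exact absurd hj' (lt_irrefl 0)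
          · exact h
        rcases eq_or_ne i j' with rfl | hne
        · exact ih i hq t ht k hk
        · have hp : 0 < (1 + A) i j' := by
            rcases h1.eq_or_lt with h | h
            · rw [← h, zero_mul] at hj'; exact absurd hj' (lt_irrefl 0)
            · exact h
          have hA' : 0 < A i j' := by
            have he : (1 + A) i j' = (1 : Matrix (Fin m) (Fin m) ℝ) i j' + A i j' := rfl
            rw [he, Matrix.one_apply, if_neg hne, zero_add] at hp
            exact hp
          have ht2 : 0 < t / 2 := half_pos ht.1
          have hSj' : ∀ l, 0 < B l j' → 0 < x (t / 2) l := fun l hl =>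
            ih j' hq (t / 2) ⟨ht2, by linarith [ht.2]⟩ l hl
          exact step3 i j' hA' (t / 2) t ht2.le (by linarith [ht.1]) ht.2 hSj' k hk
  intro t ht k
  obtain ⟨j, hj⟩ := hBrow k
  have hBkj : 0 < B k j := (hBnn k j).lt_of_ne (Ne.symm hj)
  exact claim (m - 1) j (hAirr j j₀) t ht k hBkj
end

section
/- Consider any solution x : [0, T] → [0,∞)ⁿ of the system whose initial point x(0) is not a boundary equilibrium (i.e. it is not the case that f(x(0)) = 0 and some coordinate of x(0) is zero). Then x(t) ∈ (0,∞)ⁿ for all t ∈ (0, T]. -/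
open Set Finset

/-- power bound: for `0 ≤ a ≤ D`, `1 ≤ D`, `1 ≤ c` we have `a ^ c ≤ a * D ^ c`. -/
lemma aux_rpow_le {a D c : ℝ} (ha : 0 ≤ a) (haD : a ≤ D) (hD : 1 ≤ D) (hc : 1 ≤ c) :
    a ^ c ≤ a * D ^ c := by
  rcases eq_or_lt_of_le ha with h0 | hpos
  · rw [← h0, Real.zero_rpow (by linarith : c ≠ 0), zero_mul]
  · have h1 : a ^ c = a * a ^ (c - 1) := by
      calc a ^ c = a ^ ((1:ℝ) + (c - 1)) := by ring_nf
        _ = a ^ (1:ℝ) * a ^ (c - 1) := Real.rpow_add hpos 1 (c - 1)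
        _ = a * a ^ (c - 1) := by rw [Real.rpow_one]
    rw [h1]
    apply mul_le_mul_of_nonneg_left _ ha
    calc a ^ (c - 1) ≤ D ^ (c - 1) := Real.rpow_le_rpow ha haD (by linarith)
      _ ≤ D ^ c := Real.rpow_le_rpow_of_exponent_le hD (by linarith)

/-- product bound used in the Gronwall estimate. -/
lemma aux_prod_le {n : ℕ} (φ : Fin n → ℝ) (b : Fin n → ℝ) (Dm : ℝ) (k : Fin n)
    (hφ : ∀ l, 0 ≤ φ l) (hφD : ∀ l, φ l ≤ Dm) (hD : 1 ≤ Dm) (hb : ∀ l, 0 ≤ b l)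
    (hbk : 1 ≤ b k) :
    ∏ l, φ l ^ b l ≤ φ k * ∏ l, Dm ^ b l := by
  have hD0 : (0:ℝ) ≤ Dm := le_trans zero_le_one hD
  rw [← Finset.mul_prod_erase Finset.univ (fun l => φ l ^ b l) (Finset.mem_univ k),
      ← Finset.mul_prod_erase Finset.univ (fun l => Dm ^ b l) (Finset.mem_univ k),
      ← mul_assoc]
  apply mul_le_mul
  · exact aux_rpow_le (hφ k) (hφD k) hD hbk
  · exact Finset.prod_le_prod (fun l _ => Real.rpow_nonneg (hφ l) _)
      (fun l _ => Real.rpow_le_rpow (hφ l) (hφD l) (hb l))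
  · exact Finset.prod_nonneg (fun l _ => Real.rpow_nonneg (hφ l) _)
  · exact mul_nonneg (hφ k) (Real.rpow_nonneg hD0 _)

/-- block structure is preserved by powers of `1 + A`. -/
lemma aux_block {m : ℕ} (A : Matrix (Fin m) (Fin m) ℝ) (P : Fin m → Prop)
    (h : ∀ i j, ¬ P i → P j → A i j = 0) (p : ℕ) :
    ∀ i j, ¬ P i → P j → ((1 + A) ^ p) i j = 0 := by
  induction p with
  | zero =>
    intro i j hi hj
    rw [pow_zero]
    have hij : i ≠ j := fun hij => hi (hij ▸ hj)
    simp [Matrix.one_apply_ne hij]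
  | succ p ih =>
    intro i j hi hj
    rw [pow_succ, Matrix.mul_apply]
    apply Finset.sum_eq_zero
    intro c _
    by_cases hc : P c
    · rw [ih i c hi hc, zero_mul]
    · have h1 : (1 + A) c j = 0 := by
        have hcj : c ≠ j := fun hcj => hc (hcj ▸ hj)
        simp [Matrix.add_apply, Matrix.one_apply_ne hcj, h c j hc hj]
      rw [h1, mul_zero]

theorem stmt_15
    (n m : ℕ) (hm : 0 < m) (hmn : m ≤ n)
    (θ : ℝ → ℝ)
    (hθlip : LocallyLipschitz θ)
    (hθ0 : θ 0 = 0)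
    (hθnn : ∀ y : ℝ, 0 ≤ θ y)
    (hθmono : StrictMonoOn θ (Set.Ici (0:ℝ)))
    (hθonto : ∀ r : ℝ, 0 ≤ r → ∃ y : ℝ, 0 ≤ y ∧ θ y = r)
    (hθint : MeasureTheory.IntegrableOn (fun y => |Real.log (θ y)|) (Set.Ioc (0:ℝ) 1))
    (A : Matrix (Fin m) (Fin m) ℝ)
    (hAnn : ∀ i j, 0 ≤ A i j)
    (hAirr : ∀ i j, 0 < ((1 + A) ^ (m - 1)) i j)
    (B : Matrix (Fin n) (Fin m) ℝ)
    (hBnn : ∀ k j, 0 ≤ B k j)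
    (hBrank : B.rank = m)
    (hBrow : ∀ k, ∃ j, B k j ≠ 0)
    (hBent : ∀ k j, B k j = 0 ∨ 1 ≤ B k j)
    (f : EuclideanSpace ℝ (Fin n) → EuclideanSpace ℝ (Fin n))
    (hf : ∀ x : EuclideanSpace ℝ (Fin n), ∀ k : Fin n,
      f x k = ∑ i : Fin m, ∑ j : Fin m,
        A i j * (∏ l : Fin n, θ (x l) ^ (B l j)) * (B k i - B k j))
    :
    ∀ T : ℝ, 0 ≤ T → ∀ x : ℝ → EuclideanSpace ℝ (Fin n),
      (∀ t ∈ Set.Icc (0:ℝ) T, HasDerivWithinAt x (f (x t)) (Set.Icc 0 T) t) →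
      (∀ t ∈ Set.Icc (0:ℝ) T, ∀ k, 0 ≤ x t k) →
      ¬ (f (x 0) = 0 ∧ ∃ k, x 0 k = 0) →
      ∀ t ∈ Set.Ioc (0:ℝ) T, ∀ k, 0 < x t k := by
  classical
  intro T hT x hderiv hnn hne
  by_contra hcon
  push_neg at hcon
  obtain ⟨t0, ht0, k0, hk0le⟩ := hcon
  have hk0 : x t0 k0 = 0 :=
    le_antisymm hk0le (hnn t0 (Set.Ioc_subset_Icc_self ht0) k0)
  have hnpos : 0 < n := lt_of_lt_of_le hm hmn
  haveI : Nonempty (Fin n) := ⟨⟨0, hnpos⟩⟩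
  -- coordinate derivatives
  have hcd : ∀ (k : Fin n), ∀ t ∈ Set.Icc (0:ℝ) T,
      HasDerivWithinAt (fun s => x s k) (f (x t) k) (Set.Icc (0:ℝ) T) t := by
    intro k t ht
    have := (EuclideanSpace.proj (𝕜 := ℝ) k).hasFDerivAt.comp_hasDerivWithinAt
      (x := t) (hderiv t ht)
    exact this
  have hcont : ∀ (k : Fin n), ContinuousOn (fun s => x s k) (Set.Icc (0:ℝ) T) :=
    fun k t ht => (hcd k t ht).continuousWithinAt
  -- a uniform bound on the trajectory
  choose Cb hCb using fun k => (isCompact_Icc (a := (0:ℝ)) (b := T)).exists_bound_of_continuousOn (hcont k)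
  set R : ℝ := Finset.univ.sup' Finset.univ_nonempty Cb with hRdef
  have hR : ∀ s ∈ Set.Icc (0:ℝ) T, ∀ l, x s l ≤ R := by
    intro s hs l
    have h1 : |x s l| ≤ Cb l := by simpa [Real.norm_eq_abs] using hCb l s hs
    exact le_trans (le_trans (le_abs_self _) h1) (Finset.le_sup' Cb (Finset.mem_univ l))
  have hR0 : (0:ℝ) ≤ R := by
    have h1 : |x 0 ⟨0, hnpos⟩| ≤ Cb ⟨0, hnpos⟩ := by
      simpa [Real.norm_eq_abs] using hCb ⟨0, hnpos⟩ 0 ⟨le_rfl, hT⟩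
    exact le_trans (le_trans (abs_nonneg _) h1) (Finset.le_sup' Cb (Finset.mem_univ _))
  -- a linear bound on θ on [0, R]
  obtain ⟨K0, tset, htset, hK0⟩ := hθlip 0
  obtain ⟨δ, hδpos, hδsub⟩ := Metric.mem_nhds_iff.mp htset
  obtain ⟨D1, hD1⟩ := (isCompact_Icc (a := (0:ℝ)) (b := R)).exists_bound_of_continuousOn
    (hθlip.continuous.continuousOn)
  have hD1nn : 0 ≤ D1 := le_trans (norm_nonneg _) (hD1 0 ⟨le_rfl, hR0⟩)
  set K : ℝ := max (K0 : ℝ) (D1 / (δ/2)) with hKdef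
  have hKnn : 0 ≤ K := le_trans K0.coe_nonneg (le_max_left _ _)
  have hKθ : ∀ u : ℝ, 0 ≤ u → u ≤ R → θ u ≤ K * u := by
    intro u h0 hu
    by_cases huδ : u ≤ δ/2
    · have humem : u ∈ tset := by
        apply hδsub
        simp only [Metric.mem_ball, Real.dist_eq, sub_zero]
        rw [abs_of_nonneg h0]; linarith
      have h0mem : (0:ℝ) ∈ tset := hδsub (Metric.mem_ball_self hδpos)
      have hd := hK0.dist_le_mul u humem 0 h0mem
      rw [hθ0, Real.dist_eq, Real.dist_eq, sub_zero, sub_zero, abs_of_nonneg h0] at hd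
      have h2 : θ u ≤ (K0:ℝ) * u := le_trans (le_abs_self _) hd
      exact h2.trans (mul_le_mul_of_nonneg_right (le_max_left _ _) h0)
    · push_neg at huδ
      have h1 : θ u ≤ D1 := by
        have := hD1 u ⟨h0, hu⟩
        rw [Real.norm_eq_abs] at this
        exact le_trans (le_abs_self _) this
      have hδ2 : (0:ℝ) < δ/2 := by linarith
      have h2 : D1 ≤ (D1 / (δ/2)) * u := by
        have h3 : (D1 / (δ/2)) * (δ/2) ≤ (D1 / (δ/2)) * u :=
          mul_le_mul_of_nonneg_left huδ.le (div_nonneg hD1nn hδ2.le)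
        rwa [div_mul_cancel₀ _ (ne_of_gt hδ2)] at h3
      exact h1.trans (h2.trans (mul_le_mul_of_nonneg_right (le_max_right _ _) h0))
  set Dm : ℝ := max 1 (K * R) with hDmdef
  have hDm1 : (1:ℝ) ≤ Dm := le_max_left _ _
  have hθD : ∀ s ∈ Set.Icc (0:ℝ) T, ∀ l, θ (x s l) ≤ Dm := by
    intro s hs l
    have h1 : θ (x s l) ≤ K * x s l := hKθ _ (hnn s hs l) (hR s hs l)
    have h2 : K * x s l ≤ K * R := mul_le_mul_of_nonneg_left (hR s hs l) hKnn
    exact h1.trans (h2.trans (le_max_right _ _))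
  -- key lemma: zeros propagate backwards
  have key : ∀ (k : Fin n) (t1 : ℝ), 0 < t1 → t1 ≤ T → x t1 k = 0 →
      ∀ t, 0 ≤ t → t ≤ t1 → x t k = 0 := by
    intro k t1 ht1pos ht1T hx1 t htnn htt1
    set C : ℝ := K * ∑ i : Fin m, ∑ j : Fin m, A i j * (B k j * ∏ l, Dm ^ B l j) with hCdef
    have hsum_nn : (0:ℝ) ≤ ∑ i : Fin m, ∑ j : Fin m, A i j * (B k j * ∏ l, Dm ^ B l j) := by
      refine Finset.sum_nonneg fun i _ => Finset.sum_nonneg fun j _ => ?_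
      exact mul_nonneg (hAnn i j) (mul_nonneg (hBnn k j)
        (Finset.prod_nonneg fun l _ => Real.rpow_nonneg (by linarith) _))
    have hCnn : 0 ≤ C := mul_nonneg hKnn hsum_nn
    -- the pointwise bound on the derivative
    have hbound : ∀ s ∈ Set.Icc (0:ℝ) T, -(C * x s k) ≤ f (x s) k := by
      intro s hs
      rw [hf]
      have hsplit : (∑ i : Fin m, ∑ j : Fin m,
            A i j * (∏ l, θ (x s l) ^ B l j) * (B k i - B k j))
          = (∑ i : Fin m, ∑ j : Fin m, A i j * (∏ l, θ (x s l) ^ B l j) * B k i)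
            - (∑ i : Fin m, ∑ j : Fin m, A i j * (∏ l, θ (x s l) ^ B l j) * B k j) := by
        rw [← Finset.sum_sub_distrib]
        refine Finset.sum_congr rfl fun i _ => ?_
        rw [← Finset.sum_sub_distrib]
        exact Finset.sum_congr rfl fun j _ => by ring
      have hS1 : (0:ℝ) ≤ ∑ i : Fin m, ∑ j : Fin m,
          A i j * (∏ l, θ (x s l) ^ B l j) * B k i := by
        refine Finset.sum_nonneg fun i _ => Finset.sum_nonneg fun j _ => ?_
        exact mul_nonneg (mul_nonneg (hAnn i j)
          (Finset.prod_nonneg fun l _ => Real.rpow_nonneg (hθnn _) _)) (hBnn k i)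
      have hS2 : (∑ i : Fin m, ∑ j : Fin m,
          A i j * (∏ l, θ (x s l) ^ B l j) * B k j) ≤ C * x s k := by
        have hCx : C * x s k = ∑ i : Fin m, ∑ j : Fin m,
            A i j * ((K * x s k) * ∏ l, Dm ^ B l j) * B k j := by
          rw [hCdef, mul_comm K _, mul_assoc, Finset.sum_mul]
          refine Finset.sum_congr rfl fun i _ => ?_
          rw [Finset.sum_mul]
          exact Finset.sum_congr rfl fun j _ => by ring
        rw [hCx]
        refine Finset.sum_le_sum fun i _ => Finset.sum_le_sum fun j _ => ?_
        rcases hBent k j with h0 | h1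
        · rw [h0, mul_zero, mul_zero]
        · have hMle : (∏ l, θ (x s l) ^ B l j) ≤ θ (x s k) * ∏ l, Dm ^ B l j :=
            aux_prod_le (fun l => θ (x s l)) (fun l => B l j) Dm k
              (fun l => hθnn _) (fun l => hθD s hs l) hDm1 (fun l => hBnn l j) h1
          have hθk : θ (x s k) ≤ K * x s k := hKθ _ (hnn s hs k) (hR s hs k)
          have hPnn : (0:ℝ) ≤ ∏ l, Dm ^ B l j :=
            Finset.prod_nonneg fun l _ => Real.rpow_nonneg (by linarith) _
          have h2 : (∏ l, θ (x s l) ^ B l j) ≤ (K * x s k) * ∏ l, Dm ^ B l j :=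
            hMle.trans (mul_le_mul_of_nonneg_right hθk hPnn)
          exact mul_le_mul_of_nonneg_right
            (mul_le_mul_of_nonneg_left h2 (hAnn i j)) (hBnn k j)
      rw [hsplit]
      linarith
    -- Gronwall via monotonicity of e^{Ct} x_k(t)
    set g : ℝ → ℝ := fun s => Real.exp (C * s) * x s k with hgdef
    set g' : ℝ → ℝ := fun s => C * Real.exp (C * s) * x s k + Real.exp (C * s) * f (x s) k
      with hg'def
    have hgd : ∀ s ∈ Set.Icc (0:ℝ) t1, HasDerivWithinAt g (g' s) (Set.Icc (0:ℝ) t1) s := by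
      intro s hs
      have hmem : s ∈ Set.Icc (0:ℝ) T := ⟨hs.1, hs.2.trans ht1T⟩
      have h1 : HasDerivAt (fun u => Real.exp (C * u)) (C * Real.exp (C * s)) s := by
        have := ((hasDerivAt_id s).const_mul C).exp
        simpa [mul_comm] using this
      have h2 : HasDerivWithinAt (fun u => x u k) (f (x s) k) (Set.Icc (0:ℝ) t1) s :=
        (hcd k s hmem).mono (Set.Icc_subset_Icc le_rfl ht1T)
      have := h1.hasDerivWithinAt.mul h2
      exact this
    have hmono : MonotoneOn g (Set.Icc (0:ℝ) t1) := by
      apply monotoneOn_of_hasDerivWithinAt_nonneg (convex_Icc 0 t1)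
        (fun s hs => (hgd s hs).continuousWithinAt)
        (f' := g')
        (fun s hs => ((hgd s (interior_subset hs)).mono interior_subset))
      intro s hs
      have hsI : s ∈ Set.Icc (0:ℝ) t1 := interior_subset hs
      have hmem : s ∈ Set.Icc (0:ℝ) T := ⟨hsI.1, hsI.2.trans ht1T⟩
      have hb := hbound s hmem
      have hx := hnn s hmem k
      have he := Real.exp_pos (C * s)
      have h3 : Real.exp (C * s) * (-(C * x s k)) ≤ Real.exp (C * s) * f (x s) k :=
        mul_le_mul_of_nonneg_left hb he.le
      simp only [hg'def]
      nlinarith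
    have h1 : g t ≤ g t1 := hmono ⟨htnn, htt1⟩ ⟨ht1pos.le, le_rfl⟩ htt1
    have h2 : g t1 = 0 := by simp [hgdef, hx1]
    have h3 : Real.exp (C * t) * x t k ≤ 0 := by
      have := h1; rw [h2] at this; simpa [hgdef] using this
    have hx := hnn t ⟨htnn, htt1.trans ht1T⟩ k
    have he := Real.exp_pos (C * t)
    nlinarith
  -- the set of coordinates that vanish at some positive time
  set P : Fin n → Prop := fun k => ∃ s : ℝ, 0 < s ∧ s ≤ T ∧ x s k = 0 with hPdef
  have hk0P : P k0 := ⟨t0, ht0.1, ht0.2, hk0⟩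
  have hτex : ∀ k, ∃ s : ℝ, 0 < s ∧ s ≤ T ∧ (P k → x s k = 0) := by
    intro k
    by_cases h : P k
    · obtain ⟨s, h1, h2, h3⟩ := h
      exact ⟨s, h1, h2, fun _ => h3⟩
    · exact ⟨t0, ht0.1, ht0.2, fun hk => absurd hk h⟩
  choose τ hτpos hτT hτzero using hτex
  set ε : ℝ := Finset.univ.inf' Finset.univ_nonempty τ with hεdef
  have hεpos : 0 < ε := by
    rw [hεdef, Finset.lt_inf'_iff]
    exact fun k _ => hτpos k
  have hεT : ε ≤ T :=
    le_trans (Finset.inf'_le τ (Finset.mem_univ k0)) (hτT k0)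
  have hS0 : ∀ k, P k → ∀ s, 0 ≤ s → s ≤ ε → x s k = 0 := by
    intro k hk s h1 h2
    exact key k (τ k) (hτpos k) (hτT k) (hτzero k hk) s h1
      (h2.trans (Finset.inf'_le τ (Finset.mem_univ k)))
  have hSpos : ∀ k, ¬ P k → ∀ s, 0 < s → s ≤ T → 0 < x s k := by
    intro k hk s h1 h2
    rcases lt_or_eq_of_le (hnn s ⟨h1.le, h2⟩ k) with h | h
    · exact h
    · exact absurd ⟨s, h1, h2, h.symm⟩ hk
  -- work at time t1 = ε/2
  set t1 : ℝ := ε / 2 with ht1def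
  have ht1pos : 0 < t1 := by rw [ht1def]; linarith
  have ht1ε : t1 < ε := by rw [ht1def]; linarith
  have ht1T : t1 ≤ T := le_trans ht1ε.le hεT
  have hxt1z : ∀ l, P l → x t1 l = 0 := fun l hl => hS0 l hl t1 ht1pos.le ht1ε.le
  have hxt1p : ∀ l, ¬ P l → 0 < x t1 l := fun l hl => hSpos l hl t1 ht1pos ht1T
  -- monomials at t1
  have hMpos : ∀ j, (∀ l, P l → B l j = 0) → 0 < ∏ l, θ (x t1 l) ^ B l j := by
    intro j hj
    refine Finset.prod_pos fun l _ => ?_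
    rcases hBent l j with h0 | h1
    · rw [h0, Real.rpow_zero]; exact one_pos
    · have hlP : ¬ P l := fun hPl => by
        have := hj l hPl; linarith
      have hxl : 0 < x t1 l := hxt1p l hlP
      have hθl : 0 < θ (x t1 l) := by
        have := hθmono (Set.mem_Ici.mpr le_rfl) (Set.mem_Ici.mpr hxl.le) hxl
        rwa [hθ0] at this
      exact Real.rpow_pos_of_pos hθl _
  have hMzero : ∀ j, ¬ (∀ l, P l → B l j = 0) → (∏ l, θ (x t1 l) ^ B l j) = 0 := by
    intro j hj
    push_neg at hj
    obtain ⟨l, hl, hB⟩ := hj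
    refine Finset.prod_eq_zero (Finset.mem_univ l) ?_
    rw [hxt1z l hl, hθ0, Real.zero_rpow hB]
  -- derivative vanishes at t1 for coordinates in P
  have hder0 : ∀ k, P k → f (x t1) k = 0 := by
    intro k hk
    have h1 : HasDerivWithinAt (fun s => x s k) (f (x t1) k) (Set.Icc (0:ℝ) ε) t1 :=
      (hcd k t1 ⟨ht1pos.le, ht1T⟩).mono (Set.Icc_subset_Icc le_rfl hεT)
    have h2 : HasDerivWithinAt (fun _ : ℝ => (0:ℝ)) (f (x t1) k) (Set.Icc (0:ℝ) ε) t1 :=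
      h1.congr (fun y hy => (hS0 k hk y hy.1 hy.2).symm) (hS0 k hk t1 ht1pos.le ht1ε.le).symm
    have h3 : Set.Icc (0:ℝ) ε ∈ nhds t1 := Icc_mem_nhds ht1pos ht1ε
    exact ((h2.hasDerivAt h3).unique (hasDerivAt_const t1 0)).symm ▸ rfl
  -- each term of the sum vanishes
  have hterm : ∀ k, P k → ∀ i j, A i j * (∏ l, θ (x t1 l) ^ B l j) * B k i = 0 := by
    intro k hk
    have h0 := hder0 k hk
    rw [hf] at h0
    have heq : (∑ i : Fin m, ∑ j : Fin m,
          A i j * (∏ l, θ (x t1 l) ^ B l j) * (B k i - B k j))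
        = ∑ i : Fin m, ∑ j : Fin m, A i j * (∏ l, θ (x t1 l) ^ B l j) * B k i := by
      refine Finset.sum_congr rfl fun i _ => Finset.sum_congr rfl fun j _ => ?_
      by_cases hj : ∀ l, P l → B l j = 0
      · rw [hj k hk, sub_zero]
      · rw [hMzero j hj]; ring
    rw [heq] at h0
    have hnonneg : ∀ i ∈ Finset.univ (α := Fin m),
        (0:ℝ) ≤ ∑ j : Fin m, A i j * (∏ l, θ (x t1 l) ^ B l j) * B k i := by
      intro i _
      refine Finset.sum_nonneg fun j _ => ?_
      exact mul_nonneg (mul_nonneg (hAnn i j)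
        (Finset.prod_nonneg fun l _ => Real.rpow_nonneg (hθnn _) _)) (hBnn k i)
    intro i j
    have h1 := (Finset.sum_eq_zero_iff_of_nonneg hnonneg).mp h0 i (Finset.mem_univ i)
    have hnonneg2 : ∀ j ∈ Finset.univ (α := Fin m),
        (0:ℝ) ≤ A i j * (∏ l, θ (x t1 l) ^ B l j) * B k i := by
      intro j _
      exact mul_nonneg (mul_nonneg (hAnn i j)
        (Finset.prod_nonneg fun l _ => Real.rpow_nonneg (hθnn _) _)) (hBnn k i)
    exact (Finset.sum_eq_zero_iff_of_nonneg hnonneg2).mp h1 j (Finset.mem_univ j)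
  -- main case split
  by_cases hJ : ∃ j, ∀ l, P l → B l j = 0
  · -- contradiction with irreducibility
    obtain ⟨j0, hj0⟩ := hJ
    obtain ⟨jstar, hjstar⟩ := hBrow k0
    have hjstarN : ¬ (∀ l, P l → B l jstar = 0) := fun h => hjstar (h k0 hk0P)
    have hA0 : ∀ i j, ¬ (∀ l, P l → B l i = 0) → (∀ l, P l → B l j = 0) → A i j = 0 := by
      intro i j hi hj
      push_neg at hi
      obtain ⟨l, hl, hBl⟩ := hi
      have h1 := hterm l hl i j
      have h2 : (∏ l', θ (x t1 l') ^ B l' j) ≠ 0 := ne_of_gt (hMpos j hj)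
      rcases mul_eq_zero.mp h1 with h3 | h3
      · rcases mul_eq_zero.mp h3 with h4 | h4
        · exact h4
        · exact absurd h4 h2
      · exact absurd h3 hBl
    have hblock := aux_block A (fun j => ∀ l, P l → B l j = 0) hA0 (m - 1) jstar j0 hjstarN hj0
    have := hAirr jstar j0
    rw [hblock] at this
    exact lt_irrefl 0 this
  · -- all monomials vanish at time 0 : x 0 is a boundary equilibrium
    push_neg at hJ
    have hx0z : ∀ l, P l → x 0 l = 0 := fun l hl => hS0 l hl 0 le_rfl hεpos.le
    have hf0 : f (x 0) = 0 := by
      ext k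
      rw [hf]
      have h0 : ∀ i ∈ Finset.univ (α := Fin m), (∑ j : Fin m,
          A i j * (∏ l, θ (x 0 l) ^ B l j) * (B k i - B k j)) = 0 := by
        intro i _
        refine Finset.sum_eq_zero fun j _ => ?_
        obtain ⟨l, hl, hB⟩ := hJ j
        have hprod : (∏ l', θ (x 0 l') ^ B l' j) = 0 := by
          refine Finset.prod_eq_zero (Finset.mem_univ l) ?_
          rw [hx0z l hl, hθ0, Real.zero_rpow hB]
        rw [hprod]; ring
      rw [Finset.sum_eq_zero h0]
      rfl
    exact hne ⟨hf0, k0, hx0z k0 hk0P⟩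
end

section
/- For each fixed z ∈ (0,∞)ⁿ, the function W(·, z) : [0,∞)ⁿ → ℝ defined by W(x, z) := Σ_{i=1}^n ( ∫₁^{x_i} ρ(s) ds − ρ(z_i) x_i ) is well defined and continuous, satisfies W(x, z) > W(z, z) for every x ∈ [0,∞)ⁿ with x ≠ z (so z is the unique global minimizer of W(·, z)), and has compact sublevel sets: {x ∈ [0,∞)ⁿ : W(x, z) ≤ w} is compact for every w ∈ ℝ. -/
open MeasureTheory Set

theorem stmt_18
    (n : ℕ) (hn : 0 < n)
    (θ : ℝ → ℝ)
    (hθlip : LocallyLipschitz θ)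
    (hθ0 : θ 0 = 0)
    (hθnn : ∀ y : ℝ, 0 ≤ θ y)
    (hθmono : StrictMonoOn θ (Set.Ici (0:ℝ)))
    (hθonto : ∀ r : ℝ, 0 ≤ r → ∃ y : ℝ, 0 ≤ y ∧ θ y = r)
    (hθint : MeasureTheory.IntegrableOn (fun y => |Real.log (θ y)|) (Set.Ioc (0:ℝ) 1))
    (z : EuclideanSpace ℝ (Fin n)) (hz : ∀ k, 0 < z k)
    (W : EuclideanSpace ℝ (Fin n) → ℝ)
    (hW : ∀ x : EuclideanSpace ℝ (Fin n),
      W x = ∑ i, ((∫ s in (1:ℝ)..(x i), Real.log (θ s)) - Real.log (θ (z i)) * x i))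
    :
    ContinuousOn W {x : EuclideanSpace ℝ (Fin n) | ∀ k, 0 ≤ x k} ∧
    (∀ x : EuclideanSpace ℝ (Fin n), (∀ k, 0 ≤ x k) → x ≠ z → W z < W x) ∧
    (∀ w : ℝ, IsCompact {x : EuclideanSpace ℝ (Fin n) | (∀ k, 0 ≤ x k) ∧ W x ≤ w}) := by
  classical
  set ρ : ℝ → ℝ := fun s => Real.log (θ s) with hρdef
  have hθc : Continuous θ := hθlip.continuous
  have hθpos : ∀ t : ℝ, 0 < t → 0 < θ t := by
    intro t ht
    have := hθmono (le_refl (0:ℝ)) (le_of_lt ht) ht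
    rwa [hθ0] at this
  -- continuity of ρ on positive reals
  have hρca : ∀ t : ℝ, 0 < t → ContinuousAt ρ t := by
    intro t ht
    exact (Real.continuousAt_log (ne_of_gt (hθpos t ht))).comp hθc.continuousAt
  -- strict monotonicity of ρ on positives
  have hρmono : StrictMonoOn ρ (Set.Ioi (0:ℝ)) := by
    intro a ha b hb hab
    exact Real.log_lt_log (hθpos a ha) (hθmono (Set.mem_Ici.mpr (le_of_lt (Set.mem_Ioi.mp ha))) (Set.mem_Ici.mpr (le_of_lt (lt_trans (Set.mem_Ioi.mp ha) hab))) hab)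
  -- measurability of ρ
  have hρmeas : Measurable ρ := Real.measurable_log.comp hθc.measurable
  -- integrability of ρ on Ioc 0 1
  have hρint01 : IntegrableOn ρ (Set.Ioc (0:ℝ) 1) := by
    refine hθint.mono' hρmeas.aestronglyMeasurable.restrict ?_
    filter_upwards with a
    simp [hρdef]
  -- interval integrability from 0 to any nonneg b
  have hII0 : ∀ b : ℝ, 0 ≤ b → IntervalIntegrable ρ volume 0 b := by
    intro b hb
    rcases le_or_gt b 1 with hb1 | hb1
    · rw [intervalIntegrable_iff_integrableOn_Ioc_of_le hb]
      exact hρint01.mono_set (Set.Ioc_subset_Ioc le_rfl hb1)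
    · have h01 : IntervalIntegrable ρ volume 0 1 := by
        rw [intervalIntegrable_iff_integrableOn_Ioc_of_le zero_le_one]
        exact hρint01
      have h1b : IntervalIntegrable ρ volume 1 b := by
        apply ContinuousOn.intervalIntegrable
        intro s hs
        rw [Set.uIcc_of_le (le_of_lt hb1)] at hs
        exact (hρca s (lt_of_lt_of_le zero_lt_one hs.1)).continuousWithinAt
      exact h01.trans h1b
  have hII : ∀ a b : ℝ, 0 ≤ a → 0 ≤ b → IntervalIntegrable ρ volume a b := by
    intro a b ha hb
    exact (hII0 a ha).symm.trans (hII0 b hb)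
  -- the primitive
  set F : ℝ → ℝ := fun t => ∫ s in (1:ℝ)..t, ρ s with hFdef
  have hFsub : ∀ a b : ℝ, 0 ≤ a → 0 ≤ b → F b - F a = ∫ s in a..b, ρ s := by
    intro a b ha hb
    exact intervalIntegral.integral_interval_sub_left (hII 1 b zero_le_one hb) (hII 1 a zero_le_one ha)
  -- continuity of F on [0, ∞)
  have hFcont : ContinuousOn F (Set.Ici (0:ℝ)) := by
    intro t ht
    set b : ℝ := max (t + 1) 1 with hbdef
    have hb0 : (0:ℝ) ≤ b := le_trans zero_le_one (le_max_right _ _)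
    have h1b : (1:ℝ) ∈ Set.uIcc (0:ℝ) b := by
      rw [Set.uIcc_of_le hb0]
      exact ⟨zero_le_one, le_max_right _ _⟩
    have hcont : ContinuousOn F (Set.uIcc (0:ℝ) b) :=
      intervalIntegral.continuousOn_primitive_interval' (hII0 b hb0) h1b
    have htb : t ∈ Set.uIcc (0:ℝ) b := by
      rw [Set.uIcc_of_le hb0]
      exact ⟨ht, le_trans (by linarith) (le_max_left _ _)⟩
    have hmem : Set.uIcc (0:ℝ) b ∈ nhdsWithin t (Set.Ici (0:ℝ)) := by
      rw [Set.uIcc_of_le hb0]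
      have : Set.Icc (0:ℝ) b = Set.Ici 0 ∩ Set.Iic b := (Set.Ici_inter_Iic).symm
      rw [this]
      refine Filter.inter_mem self_mem_nhdsWithin
        (mem_nhdsWithin_of_mem_nhds (Iic_mem_nhds ?_))
      have : t < t + 1 := by linarith
      exact lt_of_lt_of_le this (le_max_left _ _)
    exact (hcont t htb).mono_of_mem_nhdsWithin hmem
  -- the one-dimensional functions
  set g : Fin n → ℝ → ℝ := fun i t => F t - ρ (z i) * t with hgdef
  have hWg : ∀ x : EuclideanSpace ℝ (Fin n), W x = ∑ i, g i (x i) := by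
    intro x
    rw [hW x]
  -- difference formula
  have hgdiff : ∀ (i : Fin n) (a t : ℝ), 0 ≤ a → 0 ≤ t →
      g i t - g i a = ∫ s in a..t, (ρ s - ρ (z i)) := by
    intro i a t ha ht
    rw [intervalIntegral.integral_sub (hII a t ha ht) intervalIntegrable_const,
      intervalIntegral.integral_const, ← hFsub a t ha ht]
    simp only [hgdef, smul_eq_mul]
    ring
  -- strict minimality pointwise
  have hkey : ∀ (i : Fin n) (t : ℝ), 0 ≤ t → t ≠ z i → g i (z i) < g i t := by
    intro i t ht hne
    have hzi := hz i
    rcases lt_or_gt_of_ne hne with hlt | hgt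
    · -- t < z i
      have hpos : 0 < ∫ s in t..(z i), (ρ (z i) - ρ s) := by
        apply intervalIntegral.intervalIntegral_pos_of_pos_on
        · exact (intervalIntegrable_const).sub (hII t (z i) ht (le_of_lt hzi))
        · intro s hs
          have hs0 : 0 < s := lt_of_le_of_lt ht hs.1
          have := hρmono (Set.mem_Ioi.mpr hs0) (Set.mem_Ioi.mpr hzi) hs.2
          linarith
        · exact hlt
      have heq : ∫ s in t..(z i), (ρ (z i) - ρ s) = -(g i (z i) - g i t) := by
        have h1 := hgdiff i t (z i) ht (le_of_lt hzi)
        rw [intervalIntegral.integral_sub intervalIntegrable_const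
          (hII t (z i) ht (le_of_lt hzi)), intervalIntegral.integral_const] at *
        have h2 : ∫ s in t..(z i), ρ s - ρ (z i) =
            (∫ s in t..(z i), ρ s) - (z i - t) • ρ (z i) := by
          rw [intervalIntegral.integral_sub (hII t (z i) ht (le_of_lt hzi))
            intervalIntegrable_const, intervalIntegral.integral_const]
        rw [h2] at h1
        simp only [smul_eq_mul] at h1 ⊢
        linarith
      rw [heq] at hpos
      linarith
    · -- z i < t
      have hpos : 0 < ∫ s in (z i)..t, (ρ s - ρ (z i)) := by
        apply intervalIntegral.intervalIntegral_pos_of_pos_on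
        · exact (hII (z i) t (le_of_lt hzi) ht).sub intervalIntegrable_const
        · intro s hs
          have := hρmono (Set.mem_Ioi.mpr hzi) (Set.mem_Ioi.mpr (lt_trans hzi hs.1)) hs.1
          linarith
        · exact hgt
      have heq := hgdiff i (z i) t (le_of_lt hzi) ht
      rw [← heq] at hpos
      linarith
  have hkey' : ∀ (i : Fin n) (t : ℝ), 0 ≤ t → g i (z i) ≤ g i t := by
    intro i t ht
    rcases eq_or_ne t (z i) with h | h
    · rw [h]
    · exact le_of_lt (hkey i t ht h)
  -- Part 1: continuity
  have hproj : ∀ i : Fin n, Continuous fun x : EuclideanSpace ℝ (Fin n) => x i := by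
    intro i
    exact (EuclideanSpace.proj i).continuous
  have part1 : ContinuousOn W {x : EuclideanSpace ℝ (Fin n) | ∀ k, 0 ≤ x k} := by
    apply ContinuousOn.congr (f := fun x => ∑ i, g i (x i))
    · apply continuousOn_finset_sum
      intro i _
      apply ContinuousOn.sub
      · exact hFcont.comp (hproj i).continuousOn (fun x hx => hx i)
      · exact continuousOn_const.mul (hproj i).continuousOn
    · intro x _
      exact hWg x
  refine ⟨part1, ?_, ?_⟩
  · -- Part 2: strict minimality
    intro x hx hne
    rw [hWg x, hWg z]
    have hnej : ∃ j, x j ≠ z j := by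
      by_contra h
      push_neg at h
      exact hne (PiLp.ext h)
    obtain ⟨j, hj⟩ := hnej
    apply Finset.sum_lt_sum
    · intro i _
      exact hkey' i (x i) (hx i)
    · exact ⟨j, Finset.mem_univ j, hkey j (x j) (hx j) hj⟩
  · -- Part 3: compact sublevel sets
    intro w
    set S := {x : EuclideanSpace ℝ (Fin n) | (∀ k, 0 ≤ x k) ∧ W x ≤ w} with hSdef
    -- growth bound: choose T i with ρ (T i) = ρ (z i) + 1
    have hT : ∀ i : Fin n, ∃ T : ℝ, 0 < T ∧ ρ T = ρ (z i) + 1 := by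
      intro i
      obtain ⟨y, hy0, hyθ⟩ := hθonto (Real.exp (ρ (z i) + 1)) (le_of_lt (Real.exp_pos _))
      have hy : 0 < y := by
        rcases eq_or_lt_of_le hy0 with h | h
        · exfalso
          rw [← h, hθ0] at hyθ
          exact absurd hyθ.symm (ne_of_gt (Real.exp_pos _))
        · exact h
      exact ⟨y, hy, by rw [hρdef]; simp only [hyθ, Real.log_exp]; rfl⟩
    choose T hTpos hTρ using hT
    -- growth: for t ≥ T i, g i t ≥ g i (T i) + (t - T i)
    have hgrow : ∀ (i : Fin n) (t : ℝ), T i ≤ t → g i (T i) + (t - T i) ≤ g i t := by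
      intro i t hTt
      have hT0 := hTpos i
      have ht0 : 0 ≤ t := le_trans (le_of_lt hT0) hTt
      have hint : ∀ s ∈ Set.Icc (T i) t, (1:ℝ) ≤ ρ s - ρ (z i) := by
        intro s hs
        have hs0 : 0 < s := lt_of_lt_of_le hT0 hs.1
        have : ρ (T i) ≤ ρ s := by
          rcases eq_or_lt_of_le hs.1 with h | h
          · rw [h]
          · exact le_of_lt (hρmono (Set.mem_Ioi.mpr hT0) (Set.mem_Ioi.mpr hs0) h)
        rw [hTρ i] at this
        linarith
      have hmono := intervalIntegral.integral_mono_on (f := fun _ => (1:ℝ))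
        (g := fun s => ρ s - ρ (z i)) hTt intervalIntegrable_const
        ((hII (T i) t (le_of_lt hT0) ht0).sub intervalIntegrable_const) hint
      rw [intervalIntegral.integral_const] at hmono
      have hdiff := hgdiff i (T i) t (le_of_lt hT0) ht0
      simp only [smul_eq_mul, mul_one] at hmono
      linarith
    -- bound on coordinates of points of S
    set m : Fin n → ℝ := fun i => g i (z i) with hmdef
    set B : Fin n → ℝ := fun i => w - (∑ j, m j) + m i with hBdef
    set R : Fin n → ℝ := fun i => max (T i) (T i + (B i - g i (T i))) with hRdef
    have hbound : ∀ x ∈ S, ∀ i : Fin n, x i ≤ R i := by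
      intro x hx i
      obtain ⟨hxnn, hxw⟩ := hx
      have hsum : ∑ j, g j (x j) ≤ w := by rw [← hWg x]; exact hxw
      have hgiB : g i (x i) ≤ B i := by
        have hsplit : ∑ j, g j (x j)
            = g i (x i) + ∑ j ∈ Finset.univ.erase i, g j (x j) :=
          (Finset.add_sum_erase _ _ (Finset.mem_univ i)).symm
        have herase : ∑ j ∈ Finset.univ.erase i, m j ≤
            ∑ j ∈ Finset.univ.erase i, g j (x j) :=
          Finset.sum_le_sum (fun j _ => hkey' j (x j) (hxnn j))
        have hm : ∑ j ∈ Finset.univ.erase i, m j = (∑ j, m j) - m i :=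
          Finset.sum_erase_eq_sub (Finset.mem_univ i)
        rw [hm] at herase
        rw [hsplit] at hsum
        simp only [hBdef]
        linarith
      rcases le_or_gt (x i) (T i) with h | h
      · exact le_trans h (le_max_left _ _)
      · have := hgrow i (x i) (le_of_lt h)
        have : x i ≤ T i + (B i - g i (T i)) := by linarith
        exact le_trans this (le_max_right _ _)
    -- S is closed
    have horthclosed : IsClosed {x : EuclideanSpace ℝ (Fin n) | ∀ k, 0 ≤ x k} := by
      have : {x : EuclideanSpace ℝ (Fin n) | ∀ k, 0 ≤ x k}
          = ⋂ k, (fun x : EuclideanSpace ℝ (Fin n) => x k) ⁻¹' Set.Ici 0 := by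
        ext x; simp [Set.mem_iInter]
      rw [this]
      exact isClosed_iInter (fun k => isClosed_Ici.preimage (hproj k))
    have hSclosed : IsClosed S := by
      have : S = {x : EuclideanSpace ℝ (Fin n) | ∀ k, 0 ≤ x k} ∩ W ⁻¹' Set.Iic w := by
        ext x; simp [hSdef, Set.mem_setOf_eq]
      rw [this]
      exact part1.preimage_isClosed_of_isClosed horthclosed isClosed_Iic
    -- S is bounded: contained in a closed ball
    set R' : Fin n → ℝ := fun i => max (R i) 0 with hR'def
    set r : ℝ := Real.sqrt (∑ i, (R' i) ^ 2) with hrdef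
    have hsub : S ⊆ Metric.closedBall 0 r := by
      intro x hx
      rw [Metric.mem_closedBall, dist_zero_right]
      rw [EuclideanSpace.norm_eq]
      rw [hrdef]
      apply Real.sqrt_le_sqrt
      apply Finset.sum_le_sum
      intro i _
      have h1 : 0 ≤ x i := hx.1 i
      have h2 : x i ≤ R' i := le_trans (hbound x hx i) (le_max_left _ _)
      have : ‖x i‖ = x i := by rw [Real.norm_eq_abs, abs_of_nonneg h1]
      rw [this]
      have hR'0 : 0 ≤ R' i := le_max_right _ _
      nlinarith
    exact (isCompact_closedBall (0 : EuclideanSpace ℝ (Fin n)) r).of_isClosed_subset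
      hSclosed hsub
end
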